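/- Every 2×2 matrix over the ring of integers 𝒪 of ℚ(√5) is a sum of cubes of matrices over 𝒪, even though the element (1+√5)/2 is not a sum of cubes of elements of 𝒪. -/

import Mathlib

open Matrix

namespace MSC
variable {R : Type*} [CommRing R]

def S (R : Type*) [CommRing R] : AddSubgroup (Matrix (Fin 2) (Fin 2) R) :=
  AddSubgroup.closure (Set.range fun N : Matrix (Fin 2) (Fin 2) R => N ^ 3)

lemma cube_mem (N : Matrix (Fin 2) (Fin 2) R) : N ^ 3 ∈ S R :=
  AddSubgroup.subset_closure ⟨N, rfl⟩

lemma cube_fin (a b c d : R) :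
    (!![a, b; c, d]) ^ 3 =
      !![a^3 + 2*a*b*c + b*c*d, a^2*b + a*b*d + b^2*c + b*d^2;
         a^2*c + a*c*d + b*c^2 + c*d^2, a*b*c + 2*b*c*d + d^3] := by
  rw [pow_succ, pow_two, Matrix.mul_fin_two, Matrix.mul_fin_two]
  ext i j
  fin_cases i <;> fin_cases j <;> (simp; try ring)

lemma e12_mem (x : R) : !![0, x; 0, 0] ∈ S R := by
  have h1 : (!![1, x; 0, -1] : Matrix (Fin 2) (Fin 2) R) ^ 3 = !![1, x; 0, -1] := by
    rw [cube_fin]; ext i j; fin_cases i <;> fin_cases j <;> (simp; try ring)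
  have h2 : (!![1, 0; 0, -1] : Matrix (Fin 2) (Fin 2) R) ^ 3 = !![1, 0; 0, -1] := by
    rw [cube_fin]; ext i j; fin_cases i <;> fin_cases j <;> (simp; try ring)
  have hm := sub_mem (cube_mem (R := R) !![1, x; 0, -1]) (cube_mem (R := R) !![1, 0; 0, -1])
  rw [h1, h2] at hm
  convert hm using 1
  ext i j; fin_cases i <;> fin_cases j <;> simp

lemma e21_mem (x : R) : !![0, 0; x, 0] ∈ S R := by
  have h1 : (!![1, 0; x, -1] : Matrix (Fin 2) (Fin 2) R) ^ 3 = !![1, 0; x, -1] := by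
    rw [cube_fin]; ext i j; fin_cases i <;> fin_cases j <;> (simp; try ring)
  have h2 : (!![1, 0; 0, -1] : Matrix (Fin 2) (Fin 2) R) ^ 3 = !![1, 0; 0, -1] := by
    rw [cube_fin]; ext i j; fin_cases i <;> fin_cases j <;> (simp; try ring)
  have hm := sub_mem (cube_mem (R := R) !![1, 0; x, -1]) (cube_mem (R := R) !![1, 0; 0, -1])
  rw [h1, h2] at hm
  convert hm using 1
  ext i j; fin_cases i <;> fin_cases j <;> simp

lemma diagpm_mem (a : R) : !![a, 0; 0, -a] ∈ S R := by
  have h1 : (!![a, 1 - a^2; 1, -a] : Matrix (Fin 2) (Fin 2) R) ^ 3 = !![a, 1 - a^2; 1, -a] := by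
    rw [cube_fin]; ext i j; fin_cases i <;> fin_cases j <;> (simp; try ring)
  have hm := sub_mem (sub_mem (cube_mem (R := R) !![a, 1 - a^2; 1, -a])
    (e12_mem (1 - a^2))) (e21_mem 1)
  rw [h1] at hm
  convert hm using 1
  ext i j; fin_cases i <;> fin_cases j <;> (simp; try ring)

lemma diag_comp (t d : R) : !![0, 0; 0, t^3 - 3*t*d] ∈ S R := by
  have h1 := cube_mem (R := R) !![t, -d; 1, 0]
  rw [cube_fin] at h1
  have hm := sub_mem (sub_mem (sub_mem h1 (e12_mem (t^2*(-d) + t*(-d)*0 + (-d)^2*1 + (-d)*0^2)))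
    (e21_mem (t^2*1 + t*1*0 + (-d)*1^2 + 1*0^2))) (diagpm_mem (t^3 + 2*t*(-d)*1 + (-d)*1*0))
  convert hm using 1
  ext i j; fin_cases i <;> fin_cases j <;> (simp; try ring)

lemma smul_diag (m n : ℤ) (u v : R) :
    m • (!![0, 0; 0, u]) + n • (!![0, 0; 0, v]) = !![0, 0; 0, m • u + n • v] := by
  ext i j; fin_cases i <;> fin_cases j <;> simp

lemma diag_any (α : R) (hα : α ^ 2 = α + 1) (b : Module.Basis (Fin 2) ℤ R)
    (hb0 : b 0 = 1) (hb1 : b 1 = α) (s : R) : !![0, 0; 0, s] ∈ S R := by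
  have hone : !![0, 0; 0, (1:R)] ∈ S R := by
    have := diag_comp (R := R) 1 0
    convert this using 1
    ext i j; fin_cases i <;> fin_cases j <;> (simp; try ring)
  have halpha : !![0, 0; 0, α] ∈ S R := by
    have := diag_comp (R := R) (1 - α) 1
    convert this using 1
    ext i j; fin_cases i <;> fin_cases j <;> simp
    linear_combination (α - 2) * hα
  have hs : (b.repr s 0) • (1:R) + (b.repr s 1) • α = s := by
    have := b.sum_repr s
    rwa [Fin.sum_univ_two, hb0, hb1] at this
  have key : (b.repr s 0) • (!![0, 0; 0, (1:R)]) + (b.repr s 1) • (!![0, 0; 0, α])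
      = !![0, 0; 0, s] := by
    rw [smul_diag, hs]
  rw [← key]
  exact add_mem (zsmul_mem hone _) (zsmul_mem halpha _)

lemma all_mem (α : R) (hα : α ^ 2 = α + 1) (b : Module.Basis (Fin 2) ℤ R)
    (hb0 : b 0 = 1) (hb1 : b 1 = α) (M : Matrix (Fin 2) (Fin 2) R) : M ∈ S R := by
  have hm := add_mem (add_mem (add_mem (e12_mem (M 0 1)) (e21_mem (M 1 0)))
    (diagpm_mem (M 0 0))) (diag_any α hα b hb0 hb1 (M 0 0 + M 1 1))
  convert hm using 1
  rw [Matrix.eta_fin_two M]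
  ext i j; fin_cases i <;> fin_cases j <;> (simp; try ring)

lemma exists_of_mem (M : Matrix (Fin 2) (Fin 2) R) (h : M ∈ S R) :
    ∃ (l : ℕ) (N : Fin l → Matrix (Fin 2) (Fin 2) R), M = ∑ i, (N i) ^ 3 := by
  induction h using AddSubgroup.closure_induction with
  | mem x hx =>
    obtain ⟨N, rfl⟩ := hx
    exact ⟨1, fun _ => N, by simp⟩
  | zero => exact ⟨0, ![], by simp⟩
  | add x y hx hy ihx ihy =>
    obtain ⟨l1, N1, rfl⟩ := ihx
    obtain ⟨l2, N2, rfl⟩ := ihy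
    exact ⟨l1 + l2, Fin.append N1 N2, by
      rw [Fin.sum_univ_add]
      simp [Fin.append_left, Fin.append_right]⟩
  | neg x hx ih =>
    obtain ⟨l, N, rfl⟩ := ih
    refine ⟨l, fun i => -N i, ?_⟩
    rw [← Finset.sum_neg_distrib]
    exact Finset.sum_congr rfl fun i _ => (Odd.neg_pow ⟨1, rfl⟩ _).symm

end MSC

theorem matrices_sum_cubes_but_golden_not (R : Type*) [CommRing R] (α : R)
    (hα : α ^ 2 = α + 1)
    (b : Module.Basis (Fin 2) ℤ R) (hb0 : b 0 = 1) (hb1 : b 1 = α) :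
    (∀ M : Matrix (Fin 2) (Fin 2) R,
      ∃ (l : ℕ) (N : Fin l → Matrix (Fin 2) (Fin 2) R), M = ∑ i, (N i) ^ 3) ∧
    ¬ ∃ (l : ℕ) (β : Fin l → R), α = ∑ i, (β i) ^ 3 := by
  constructor
  · intro M
    exact MSC.exists_of_mem M (MSC.all_mem α hα b hb0 hb1 M)
  · rintro ⟨l, β, hsum⟩
    have key : ∀ x : R, ((b.repr (x ^ 3) 1 : ℤ) : ZMod 2) = 0 := by
      intro x
      set m := b.repr x 0 with hm
      set n := b.repr x 1 with hn
      have hs : m • (1:R) + n • α = x := by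
        have := b.sum_repr x
        rwa [Fin.sum_univ_two, hb0, hb1] at this
      have hx' : x = (m : R) + (n : R) * α := by
        rw [← hs]; push_cast [zsmul_eq_mul]; ring
      have h3 : x ^ 3 = (m^3 + 3*m*n^2 + n^3 : ℤ) • b 0 + (3*m^2*n + 3*m*n^2 + 2*n^3 : ℤ) • b 1 := by
        rw [hb0, hb1, hx']
        push_cast [zsmul_eq_mul]
        linear_combination (3*(m:R)*(n:R)^2 + (n:R)^3*(α+1)) * hα
      have h4 : b.repr (x ^ 3) 1 = 3*m^2*n + 3*m*n^2 + 2*n^3 := by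
        rw [h3, map_add, _root_.map_smul, _root_.map_smul]
        simp only [Module.Basis.repr_self, Finsupp.add_apply, Finsupp.smul_apply,
          Finsupp.single_apply, smul_eq_mul]
        norm_num
      rw [h4]
      push_cast
      have h5 : ∀ u v : ZMod 2, 3*u^2*v + 3*u*v^2 + 2*v^3 = 0 := by decide
      exact h5 _ _
    have h1 : b.repr α 1 = 1 := by
      rw [← hb1, b.repr_self]; simp
    have hz : ((b.repr α 1 : ℤ) : ZMod 2) = 0 := by
      rw [hsum, map_sum, Finsupp.finset_sum_apply]
      push_cast
      exact Finset.sum_eq_zero fun i _ => key (β i)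
    rw [h1] at hz
    simp at hz
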